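/- Define A : ℕ → ℝ by A(s) = (2/3)·∏_{i=2}^{s} (1 − 1/(2i−1)). Then A(s) is asymptotic to √(π/(9s)) as s → ∞; that is, the ratio A(s)/√(π/(9s)) tends to 1 as s tends to infinity. -/

import Mathlib

open Filter Real

private lemma prod_eq_aux (s : ℕ) (hs : 1 ≤ s) :
    ∏ i ∈ Finset.Icc 2 s, (1 - 1 / (2 * (i : ℝ) - 1)) =
      4 ^ s * ((s.factorial : ℕ) : ℝ) ^ 2 / (2 * s * (((2 * s).factorial : ℕ) : ℝ)) := by
  induction s with
  | zero => omega
  | succ n ih =>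
    rcases Nat.lt_or_ge n 1 with h | h
    · interval_cases n
      norm_num [Nat.factorial]
    · have heq : Finset.Icc 2 (n + 1) = insert (n + 1) (Finset.Icc 2 n) := by
        exact (Finset.insert_Icc_right_eq_Icc_add_one (by omega)).symm
      rw [heq, Finset.prod_insert (by simp), ih h]
      have h1 : (n + 1).factorial = (n + 1) * n.factorial := Nat.factorial_succ n
      have h2 : (2 * (n + 1)).factorial = (2 * n + 2) * ((2 * n + 1) * (2 * n).factorial) := by
        rw [show 2 * (n + 1) = 2 * n + 1 + 1 by ring, Nat.factorial_succ, Nat.factorial_succ]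
      rw [h1, h2]
      push_cast
      have hf : (((2 * n).factorial : ℕ) : ℝ) ≠ 0 := by positivity
      have hn : (n : ℝ) ≥ 1 := by exact_mod_cast h
      have h3 : 2 * ((n : ℝ) + 1) - 1 ≠ 0 := by nlinarith
      field_simp
      ring

private lemma ratio_eq_aux (s : ℕ) (hs : 1 ≤ s) :
    (4 ^ s * ((s.factorial : ℕ) : ℝ) ^ 2 / (3 * s * (((2 * s).factorial : ℕ) : ℝ))) /
        Real.sqrt (π / (9 * s)) =
      Stirling.stirlingSeq s ^ 2 / (Stirling.stirlingSeq (2 * s) * Real.sqrt π) := by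
  have hsR : (1:ℝ) ≤ (s:ℝ) := by exact_mod_cast hs
  have hx : (0:ℝ) < Real.sqrt s := Real.sqrt_pos.2 (by linarith)
  have hq : (0:ℝ) < ((s:ℝ) / Real.exp 1) ^ s := by positivity
  have hF : (0:ℝ) < ((s.factorial : ℕ) : ℝ) := by positivity
  have hG : (0:ℝ) < (((2*s).factorial : ℕ) : ℝ) := by positivity
  have hpi : (0:ℝ) < Real.sqrt π := Real.sqrt_pos.2 Real.pi_pos
  have hxx : Real.sqrt (s:ℝ) ^ 2 = (s:ℝ) := Real.sq_sqrt (by linarith)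
  have hs2 : Real.sqrt (2 * (s:ℝ)) = Real.sqrt 2 * Real.sqrt s := Real.sqrt_mul (by norm_num) _
  have hs4 : Real.sqrt (2 * ((2*s : ℕ):ℝ)) = 2 * Real.sqrt s := by
    push_cast
    rw [show (2:ℝ) * (2 * s) = 4 * s by ring, Real.sqrt_mul (by norm_num),
      show (4:ℝ) = 2^2 by norm_num, Real.sqrt_sq (by norm_num)]
  have hpow : (((2*s : ℕ):ℝ) / Real.exp 1) ^ (2*s) = 4 ^ s * (((s:ℝ) / Real.exp 1) ^ s) ^ 2 := by
    push_cast
    rw [mul_div_assoc, mul_pow, ← pow_mul, pow_mul (2:ℝ)]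
    norm_num [mul_comm]
  have hsqpi : Real.sqrt (π / (9 * s)) = Real.sqrt π / (3 * Real.sqrt s) := by
    rw [Real.sqrt_div Real.pi_pos.le, Real.sqrt_mul (by norm_num), show (9:ℝ) = 3^2 by norm_num,
      Real.sqrt_sq (by norm_num)]
  have h2 : Real.sqrt 2 ^ 2 = 2 := Real.sq_sqrt (by norm_num)
  rw [Stirling.stirlingSeq, Stirling.stirlingSeq, hs2, hs4, hpow, hsqpi]
  have h2' : Real.sqrt 2 ≠ 0 := by positivity
  field_simp
  ring_nf
  rw [hxx, h2]

theorem A_asymptotic (A : ℕ → ℝ)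
    (hA : ∀ s : ℕ, A s = (2 / 3) * ∏ i ∈ Finset.Icc 2 s, (1 - 1 / (2 * (i : ℝ) - 1))) :
    Tendsto (fun s : ℕ => A s / Real.sqrt (Real.pi / (9 * (s : ℝ)))) atTop (nhds 1) := by
  have hpi : (0:ℝ) < Real.sqrt π := Real.sqrt_pos.2 Real.pi_pos
  have h2s : Tendsto (fun s : ℕ => 2 * s) atTop atTop :=
    tendsto_atTop_mono (fun n => Nat.le_mul_of_pos_left n (by norm_num)) tendsto_id
  have hlim : Tendsto
      (fun s : ℕ => Stirling.stirlingSeq s ^ 2 / (Stirling.stirlingSeq (2 * s) * Real.sqrt π))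
      atTop (nhds (Real.sqrt π ^ 2 / (Real.sqrt π * Real.sqrt π))) := by
    exact ((Stirling.tendsto_stirlingSeq_sqrt_pi.pow 2).div
      (((Stirling.tendsto_stirlingSeq_sqrt_pi.comp h2s)).mul tendsto_const_nhds)
      (by positivity))
  have h1 : Real.sqrt π ^ 2 / (Real.sqrt π * Real.sqrt π) = 1 := by
    rw [sq]; exact div_self (by positivity)
  rw [h1] at hlim
  refine hlim.congr' ?_
  filter_upwards [eventually_ge_atTop 1] with s hs
  rw [← ratio_eq_aux s hs, hA s, prod_eq_aux s hs]
  have hsR : (1:ℝ) ≤ (s:ℝ) := by exact_mod_cast hs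
  congr 1
  field_simp
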